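/- Let G be a strongly connected oriented graph (countable vertex set) and u a vertex. Let f_{uu}(n) be the number of first-return loops at u of length n, L = L_{uu} the radius of convergence of ∑ f_{uu}(n) zⁿ, and R the common radius of convergence of the series ∑ p_{uv}(n) zⁿ counting all paths. Then R < L if and only if ∑_{n≥1} f_{uu}(n) Lⁿ > 1. -/

import Mathlib

/-- Number of paths of length n from u to v in the oriented graph with adjacency
relation Adj. -/
noncomputable def pathCount {V : Type*} (Adj : V → V → Prop) (u v : V) (n : ℕ) : ℕ :=
  Nat.card {w : Fin (n + 1) → V // w 0 = u ∧ w (Fin.last n) = v ∧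
    ∀ i : Fin n, Adj (w i.castSucc) (w i.succ)}

/-- Number of first-return loops at u of length n: paths from u to u of length n
not visiting u strictly in between. -/
noncomputable def firstReturnCount {V : Type*} (Adj : V → V → Prop) (u : V) (n : ℕ) : ℕ :=
  Nat.card {w : Fin (n + 1) → V // w 0 = u ∧ w (Fin.last n) = u ∧
    (∀ i : Fin n, Adj (w i.castSucc) (w i.succ)) ∧
    ∀ i : Fin (n + 1), i ≠ 0 → i ≠ Fin.last n → w i ≠ u}

/-- A graph is strongly connected if there is a (nonempty) path between any two
vertices. -/
def StronglyConnected {V : Type*} (Adj : V → V → Prop) : Prop :=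
  ∀ u v : V, ∃ n : ℕ, 0 < n ∧ 0 < pathCount Adj u v n

/-- R is the radius of convergence of the power series ∑ g(n) zⁿ. -/
def IsRadius (g : ℕ → ℝ) (R : ℝ) : Prop :=
  0 ≤ R ∧ ∀ x : ℝ, 0 ≤ x →
    (x < R → Summable (fun n => g n * x ^ n)) ∧
    (R < x → ¬ Summable (fun n => g n * x ^ n))

namespace Stmt8

variable {V : Type*} (Adj : V → V → Prop)

/-- paths as functions on ℕ, extended by the endpoint. -/
def NP (u v : V) (n : ℕ) : Set (ℕ → V) :=
  {w | w 0 = u ∧ (∀ i, n ≤ i → w i = v) ∧ ∀ i < n, Adj (w i) (w (i + 1))}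

def NF (u : V) (n : ℕ) : Set (ℕ → V) :=
  {w | w ∈ NP Adj u u n ∧ ∀ i, 0 < i → i < n → w i ≠ u}

def npEquiv (u v : V) (n : ℕ) :
    {w : Fin (n + 1) → V // w 0 = u ∧ w (Fin.last n) = v ∧
      ∀ i : Fin n, Adj (w i.castSucc) (w i.succ)} ≃ NP Adj u v n where
  toFun w := ⟨fun i => if h : i ≤ n then w.1 ⟨i, by omega⟩ else v, by
    obtain ⟨w, h0, hl, ha⟩ := w
    refine ⟨by simpa using h0, fun i hi => ?_, fun i hi => ?_⟩
    · by_cases h : i ≤ n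
      · have : i = n := le_antisymm h hi
        subst this
        simpa [Fin.last] using hl
      · simp [h]
    · have h1 : i ≤ n := le_of_lt hi
      have h2 : i + 1 ≤ n := hi
      simp only [dif_pos h1, dif_pos h2]
      exact ha ⟨i, hi⟩⟩
  invFun w := ⟨fun i => w.1 i, by
    obtain ⟨w, h0, hl, ha⟩ := w
    refine ⟨by simpa using h0, ?_, fun i => ?_⟩
    · show w (Fin.last n : Fin (n+1)).1 = v
      exact hl n le_rfl
    · show Adj (w i.castSucc.1) (w i.succ.1)
      have := ha i.1 i.2
      simpa [Fin.castSucc, Fin.succ] using this⟩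
  left_inv w := by
    obtain ⟨w, h0, hl, ha⟩ := w
    ext i
    simp only
    rw [dif_pos (by omega : (i : ℕ) ≤ n)]
  right_inv w := by
    obtain ⟨w, h0, hl, ha⟩ := w
    ext i
    simp only
    by_cases h : i ≤ n
    · rw [dif_pos h]
    · rw [dif_neg h]
      exact (hl i (by omega)).symm

lemma pathCount_eq (u v : V) (n : ℕ) :
    pathCount Adj u v n = Nat.card (NP Adj u v n) :=
  Nat.card_congr (npEquiv Adj u v n)

def nfEquiv (u : V) (n : ℕ) :
    {w : Fin (n + 1) → V // w 0 = u ∧ w (Fin.last n) = u ∧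
      (∀ i : Fin n, Adj (w i.castSucc) (w i.succ)) ∧
      ∀ i : Fin (n + 1), i ≠ 0 → i ≠ Fin.last n → w i ≠ u} ≃ NF Adj u n where
  toFun w := ⟨fun i => if h : i ≤ n then w.1 ⟨i, by omega⟩ else u, by
    obtain ⟨w, h0, hl, ha, hint⟩ := w
    refine ⟨((npEquiv Adj u u n) ⟨w, h0, hl, ha⟩).2, fun i hi0 hin => ?_⟩
    simp only [dif_pos (by omega : i ≤ n)]
    refine hint ⟨i, by omega⟩ ?_ ?_
    · simp [Fin.ext_iff]; omega
    · simp [Fin.ext_iff, Fin.last]; omega⟩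
  invFun w := ⟨fun i => w.1 i, by
    obtain ⟨w, hw, hint⟩ := w
    obtain ⟨h0, hl, ha⟩ := ((npEquiv Adj u u n).symm ⟨w, hw⟩).2
    refine ⟨h0, hl, ha, fun i hi0 hin => ?_⟩
    refine hint i.1 ?_ ?_
    · rcases Nat.eq_zero_or_pos i.1 with h | h
      · exact absurd (Fin.ext h) hi0
      · exact h
    · rcases lt_or_eq_of_le (by omega : (i:ℕ) ≤ n) with h | h
      · exact h
      · exact absurd (Fin.ext (by simpa [Fin.last] using h)) hin⟩
  left_inv w := by
    obtain ⟨w, hw⟩ := w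
    ext i
    simp only
    rw [dif_pos (by omega : (i : ℕ) ≤ n)]
  right_inv w := by
    obtain ⟨w, hw, hint⟩ := w
    ext i
    simp only
    by_cases h : i ≤ n
    · rw [dif_pos h]
    · rw [dif_neg h]
      exact (hw.2.1 i (by omega)).symm

lemma frCount_eq (u : V) (n : ℕ) :
    firstReturnCount Adj u n = Nat.card (NF Adj u n) :=
  Nat.card_congr (nfEquiv Adj u n)


/-- concatenation of two paths, splitting at time `a`. -/
def cat (a : ℕ) (w1 w2 : ℕ → V) : ℕ → V := fun i => if i < a then w1 i else w2 (i - a)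

variable {Adj}

lemma cat_mem {u v w : V} {a b : ℕ} {w1 w2 : ℕ → V} (h1 : w1 ∈ NP Adj u v a)
    (h2 : w2 ∈ NP Adj v w b) : cat a w1 w2 ∈ NP Adj u w (a + b) := by
  obtain ⟨h10, h1t, h1a⟩ := h1
  obtain ⟨h20, h2t, h2a⟩ := h2
  refine ⟨?_, fun i hi => ?_, fun i hi => ?_⟩
  · rcases Nat.eq_zero_or_pos a with h | h
    · subst h
      have : v = u := h10 ▸ (h1t 0 le_rfl).symm
      simpa [cat, this] using h20
    · simpa [cat, h] using h10
  · have : ¬ i < a := by omega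
    simp only [cat, if_neg this]
    exact h2t _ (by omega)
  · by_cases hia : i + 1 < a
    · simp only [cat, if_pos hia, if_pos (by omega : i < a)]
      exact h1a i (by omega)
    · by_cases hia2 : i < a
      · have ha : i + 1 = a := by omega
        have : w2 (i + 1 - a) = w1 (i + 1) := by
          rw [ha, Nat.sub_self, h20, h1t a le_rfl]
        simp only [cat, if_pos hia2, if_neg hia, this]
        exact h1a i (by omega)
      · simp only [cat, if_neg hia, if_neg hia2]
        have : i + 1 - a = (i - a) + 1 := by omega
        rw [this]
        exact h2a _ (by omega)

lemma cat_left {a : ℕ} {w1 w2 : ℕ → V} {i : ℕ} (h : i < a) : cat a w1 w2 i = w1 i :=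
  if_pos h

lemma cat_right {a : ℕ} {w1 w2 : ℕ → V} {i : ℕ} (h : a ≤ i) : cat a w1 w2 i = w2 (i - a) :=
  if_neg (by omega)

lemma cat_inj {u v : V} {a : ℕ} {w1 w2 w1' w2' : ℕ → V} (h1 : w1 ∈ NP Adj u v a)
    (h1' : w1' ∈ NP Adj u v a) (heq : cat a w1 w2 = cat a w1' w2') :
    w1 = w1' ∧ w2 = w2' := by
  constructor
  · funext i
    by_cases h : i < a
    · have := congrFun heq i
      rwa [cat_left h, cat_left h] at this
    · rw [h1.2.1 i (by omega), h1'.2.1 i (by omega)]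
  · funext j
    have := congrFun heq (a + j)
    rwa [cat_right (by omega), cat_right (by omega), Nat.add_sub_cancel_left] at this


lemma np_nonempty_of_count {u v : V} {n : ℕ} (h : 0 < pathCount Adj u v n) :
    (NP Adj u v n).Nonempty := by
  rw [pathCount_eq] at h
  have := (Nat.card_pos_iff.mp h).1
  exact Set.nonempty_coe_sort.mp this

lemma np_card_zero_of_infinite {u v : V} {n : ℕ} (h : (NP Adj u v n).Infinite) :
    Nat.card (NP Adj u v n) = 0 := by
  have := h.to_subtype
  exact Nat.card_eq_zero_of_infinite

lemma np_finite (hSC : StronglyConnected Adj) {R : ℝ}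
    (hR : ∀ v w : V, IsRadius (fun n => (pathCount Adj v w n : ℝ)) R)
    (v w : V) (n : ℕ) : (NP Adj v w n).Finite := by
  by_contra hinf
  replace hinf : (NP Adj v w n).Infinite := hinf
  -- a path from w back to v
  obtain ⟨m, hm0, hmc⟩ := hSC w v
  obtain ⟨q, hq⟩ := np_nonempty_of_count hmc
  set s0 := n + m with hs0def
  have hs0 : 0 < s0 := by omega
  -- infinitely many loops at v of length s0
  have hInf : (NP Adj v v s0).Infinite := by
    have himg : ((fun p => cat n p q) '' (NP Adj v w n)).Infinite :=
      hinf.image (fun p hp p' hp' h => ((cat_inj hp hp' h).1))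
    refine himg.mono ?_
    rintro _ ⟨p, hp, rfl⟩
    exact cat_mem hp hq
  -- composing with any nonempty set of loops
  have step : ∀ N, (NP Adj v v N).Nonempty → (NP Adj v v (s0 + N)).Infinite := by
    intro N ⟨r, hr⟩
    have himg : ((fun l => cat s0 l r) '' (NP Adj v v s0)).Infinite :=
      hInf.image (fun p hp p' hp' h => ((cat_inj hp hp' h).1))
    refine himg.mono ?_
    rintro _ ⟨l, hl, rfl⟩
    exact cat_mem hl hr
  have iter : ∀ j N, (NP Adj v v N).Nonempty → (NP Adj v v ((j + 1) * s0 + N)).Infinite := by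
    intro j
    induction j with
    | zero => intro N hN; simpa using step N hN
    | succ j ih =>
      intro N hN
      have := step ((j + 1) * s0 + N) (ih N hN).nonempty
      have harith : s0 + ((j + 1) * s0 + N) = (j + 1 + 1) * s0 + N := by ring
      rwa [harith] at this
  -- the support of the loop-counting function at v is finite
  set T : Set ℕ := {N | Nat.card (NP Adj v v N) ≠ 0} with hTdef
  have hTfin : T.Finite := by
    have hinjOn : Set.InjOn (· % s0) T := by
      intro N1 h1 N2 h2 hmod
      by_contra hne
      rcases Ne.lt_or_gt hne with hlt | hlt
      · have hdvd : s0 ∣ N2 - N1 := (Nat.modEq_iff_dvd' (le_of_lt hlt)).mp hmod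
        obtain ⟨k, hk⟩ := hdvd
        have hle : N1 ≤ N2 := le_of_lt hlt
        have hk1 : 1 ≤ k := by
          rcases Nat.eq_zero_or_pos k with h | h
          · subst h; simp at hk; omega
          · exact h
        have hNe : (NP Adj v v N1).Nonempty := by
          rcases Set.eq_empty_or_nonempty (NP Adj v v N1) with h | h
          · exact absurd (by simp [h]) h1
          · exact h
        have := iter (k - 1) N1 hNe
        have harith : (k - 1 + 1) * s0 + N1 = N2 := by
          rw [(by omega : k - 1 + 1 = k), Nat.mul_comm, ← hk, Nat.sub_add_cancel hle]
        rw [harith] at this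
        exact h2 (np_card_zero_of_infinite this)
      · have hdvd : s0 ∣ N1 - N2 := (Nat.modEq_iff_dvd' (le_of_lt hlt)).mp hmod.symm
        obtain ⟨k, hk⟩ := hdvd
        have hle : N2 ≤ N1 := le_of_lt hlt
        have hk1 : 1 ≤ k := by
          rcases Nat.eq_zero_or_pos k with h | h
          · subst h; simp at hk; omega
          · exact h
        have hNe : (NP Adj v v N2).Nonempty := by
          rcases Set.eq_empty_or_nonempty (NP Adj v v N2) with h | h
          · exact absurd (by simp [h]) h2
          · exact h
        have := iter (k - 1) N2 hNe
        have harith : (k - 1 + 1) * s0 + N2 = N1 := by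
          rw [(by omega : k - 1 + 1 = k), Nat.mul_comm, ← hk, Nat.sub_add_cancel hle]
        rw [harith] at this
        exact h1 (np_card_zero_of_infinite this)
    refine Set.Finite.of_finite_image ?_ hinjOn
    refine (Set.finite_Iio s0).subset ?_
    rintro _ ⟨N, _, rfl⟩
    exact Nat.mod_lt _ hs0
  -- but then the generating series converges everywhere: contradiction with hR
  have hsum : Summable (fun k => (pathCount Adj v v k : ℝ) * (R + 1) ^ k) := by
    refine summable_of_ne_finset_zero (s := hTfin.toFinset) ?_
    intro k hk
    have : Nat.card (NP Adj v v k) = 0 := by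
      by_contra h
      exact hk (hTfin.mem_toFinset.mpr h)
    rw [pathCount_eq, this]
    simp
  have hR0 : 0 ≤ R := (hR v v).1
  exact ((hR v v).2 (R + 1) (by linarith)).2 (by linarith) hsum


lemma nf_subset (u : V) (n : ℕ) : NF Adj u n ⊆ NP Adj u u n := fun _ h => h.1

lemma np_zero (u : V) : NP Adj u u 0 = {fun _ => u} := by
  ext w
  constructor
  · intro hw
    funext i
    exact hw.2.1 i (by omega)
  · rintro rfl
    exact ⟨rfl, fun i _ => rfl, fun i hi => by omega⟩

lemma p_zero (u : V) : Nat.card (NP Adj u u 0) = 1 := by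
  rw [np_zero]
  simp

lemma nat_card_sigma {ι : Type*} [Fintype ι] (β : ι → Type*) [∀ i, Finite (β i)] :
    Nat.card (Σ i, β i) = ∑ i, Nat.card (β i) := by
  letI : ∀ i, Fintype (β i) := fun i => Fintype.ofFinite _
  simp [Nat.card_eq_fintype_card, Fintype.card_sigma]

/-- key identification of the splitting time: if `a` is a first-return loop of length
`k+1` and `b` starts at `u`, no strictly earlier positive time of `cat (k+1) a b` hits `u`. -/
lemma cat_no_lt {u : V} {k : ℕ} {a b : ℕ → V} (ha : a ∈ NF Adj u (k + 1))
    {t : ℕ} (ht0 : 0 < t) (htk : t < k + 1) : cat (k + 1) a b t ≠ u := by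
  rw [cat_left htk]
  exact ha.2 t ht0 htk

lemma cat_at {u v : V} {k m : ℕ} {a b : ℕ → V} (hb : b ∈ NP Adj u v m) :
    cat (k + 1) a b (k + 1) = u := by
  rw [cat_right le_rfl, Nat.sub_self]
  exact hb.1

lemma renewal (hfin : ∀ v w k, (NP Adj v w k).Finite) (u : V) (n : ℕ) :
    Nat.card (NP Adj u u (n + 1)) =
      ∑ k ∈ Finset.range (n + 1),
        Nat.card (NF Adj u (k + 1)) * Nat.card (NP Adj u u (n - k)) := by
  classical
  haveI : ∀ k : Fin (n + 1), Finite (NF Adj u (k.1 + 1)) := fun k =>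
    ((hfin u u (k.1 + 1)).subset (nf_subset u (k.1 + 1))).to_subtype
  haveI : ∀ k : Fin (n + 1), Finite (NP Adj u u (n - k.1)) := fun k =>
    (hfin u u (n - k.1)).to_subtype
  have hmem : ∀ (k : Fin (n + 1)) (a b : ℕ → V), a ∈ NF Adj u (k.1 + 1) →
      b ∈ NP Adj u u (n - k.1) → cat (k.1 + 1) a b ∈ NP Adj u u (n + 1) := by
    intro k a b ha hb
    have := cat_mem ha.1 hb
    have harith : (k.1 + 1) + (n - k.1) = n + 1 := by omega
    rwa [harith] at this
  set Φ : (Σ k : Fin (n + 1), ↥(NF Adj u (k.1 + 1)) × ↥(NP Adj u u (n - k.1))) →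
      ↥(NP Adj u u (n + 1)) :=
    fun x => ⟨cat (x.1.1 + 1) x.2.1.1 x.2.2.1, hmem x.1 x.2.1.1 x.2.2.1 x.2.1.2 x.2.2.2⟩
    with hΦ
  have hne : ∀ (k k' : Fin (n + 1)) (a : ↥(NF Adj u (k.1 + 1)))
      (b : ↥(NP Adj u u (n - k.1))) (a' : ↥(NF Adj u (k'.1 + 1)))
      (b' : ↥(NP Adj u u (n - k'.1))),
      cat (k.1 + 1) a.1 b.1 = cat (k'.1 + 1) a'.1 b'.1 → ¬ (k.1 < k'.1) := by
    intro k k' a b a' b' heq hlt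
    have h1 : cat (k.1 + 1) a.1 b.1 (k.1 + 1) = u := cat_at b.2
    have h2 : cat (k'.1 + 1) a'.1 b'.1 (k.1 + 1) ≠ u :=
      cat_no_lt a'.2 (by omega) (by omega)
    rw [heq] at h1
    exact h2 h1
  have hinj : Function.Injective Φ := by
    rintro ⟨k, a, b⟩ ⟨k', a', b'⟩ h
    have heq : cat (k.1 + 1) a.1 b.1 = cat (k'.1 + 1) a'.1 b'.1 := congrArg Subtype.val h
    have hkk : k = k' := by
      rcases lt_trichotomy k.1 k'.1 with hlt | heqk | hlt
      · exact absurd hlt (hne k k' a b a' b' heq)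
      · exact Fin.ext heqk
      · exact absurd hlt (hne k' k a' b' a b heq.symm)
    subst hkk
    obtain ⟨hA, hB⟩ := cat_inj a.2.1 a'.2.1 heq
    have h1 : a = a' := Subtype.ext hA
    have h2 : b = b' := Subtype.ext hB
    rw [h1, h2]
  have hsurj : Function.Surjective Φ := by
    rintro ⟨w, hw⟩
    have hex : ∃ t, 0 < t ∧ w t = u := ⟨n + 1, by omega, hw.2.1 (n + 1) le_rfl⟩
    obtain ⟨T, ⟨hT1, hTu⟩, hTmin⟩ :
        ∃ T, (0 < T ∧ w T = u) ∧ ∀ t < T, ¬(0 < t ∧ w t = u) :=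
      ⟨Nat.find hex, Nat.find_spec hex, fun t ht => Nat.find_min hex ht⟩
    have hTle : T ≤ n + 1 := by
      by_contra h
      exact hTmin (n + 1) (by omega) ⟨by omega, hw.2.1 (n + 1) le_rfl⟩
    set k := T - 1 with hkdef
    have hkT : k + 1 = T := by omega
    set a : ℕ → V := fun i => if i < T then w i else u with hadef
    set b : ℕ → V := fun j => w (j + T) with hbdef
    have ha : a ∈ NF Adj u (k + 1) := by
      rw [hkT]
      refine ⟨⟨?_, fun i hi => ?_, fun i hi => ?_⟩, fun i hi0 hiT => ?_⟩
      · simp only [hadef, if_pos hT1]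
        exact hw.1
      · simp only [hadef, if_neg (by omega : ¬ i < T)]
      · by_cases h2 : i + 1 < T
        · simp only [hadef, if_pos hi, if_pos h2]
          exact hw.2.2 i (by omega)
        · have hiT : i + 1 = T := by omega
          simp only [hadef, if_pos hi, if_neg (by omega : ¬ i + 1 < T)]
          rw [← hTu, ← hiT]
          exact hw.2.2 i (by omega)
      · simp only [hadef, if_pos hiT]
        intro h
        exact hTmin i (by omega) ⟨hi0, h⟩
    have hb : b ∈ NP Adj u u (n - k) := by
      refine ⟨?_, fun j hj => ?_, fun j hj => ?_⟩
      · simp only [hbdef, Nat.zero_add]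
        exact hTu
      · simp only [hbdef]
        exact hw.2.1 _ (by omega)
      · simp only [hbdef]
        have := hw.2.2 (j + T) (by omega)
        have harith : j + 1 + T = j + T + 1 := by omega
        rwa [harith]
    refine ⟨⟨⟨k, by omega⟩, ⟨a, ha⟩, ⟨b, hb⟩⟩, ?_⟩
    apply Subtype.ext
    funext i
    show cat (k + 1) a b i = w i
    by_cases h : i < T
    · rw [cat_left (by omega)]
      simp only [hadef, if_pos h]
    · rw [cat_right (by omega)]
      simp only [hbdef]
      congr 1
      omega
  have hcard := Nat.card_eq_of_bijective Φ ⟨hinj, hsurj⟩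
  rw [← hcard, nat_card_sigma]
  rw [← Fin.sum_univ_eq_sum_range (fun k => Nat.card (NF Adj u (k + 1)) * Nat.card (NP Adj u u (n - k))) (n + 1)]
  exact Finset.sum_congr rfl fun k _ => Nat.card_prod _ _


section Analytic

variable (p f : ℕ → ℕ)

lemma coeff_eq (hren : ∀ n, p (n + 1) = ∑ k ∈ Finset.range (n + 1), f (k + 1) * p (n - k))
    (x : ℝ) (T : ℕ) :
    ∑ q ∈ (Finset.range T ×ˢ Finset.range T).filter (fun q => q.1 + q.2 < T),
      ((f (q.1 + 1) : ℝ) * x ^ (q.1 + 1)) * ((p q.2 : ℝ) * x ^ q.2)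
    = ∑ m ∈ Finset.range T, (p (m + 1) : ℝ) * x ^ (m + 1) := by
  have h1 : ∀ m, (p (m + 1) : ℝ) * x ^ (m + 1) =
      ∑ k ∈ Finset.range (m + 1),
        ((f (k + 1) : ℝ) * x ^ (k + 1)) * ((p (m - k) : ℝ) * x ^ (m - k)) := by
    intro m
    rw [hren m]
    push_cast
    rw [Finset.sum_mul]
    refine Finset.sum_congr rfl fun k hk => ?_
    rw [Finset.mem_range] at hk
    have hpow : x ^ (m + 1) = x ^ (k + 1) * x ^ (m - k) := by
      rw [← pow_add]
      congr 1
      omega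
    rw [hpow]
    ring
  have h2 : ∑ m ∈ Finset.range T, (p (m + 1) : ℝ) * x ^ (m + 1)
      = ∑ m ∈ Finset.range T, ∑ k ∈ Finset.range (m + 1),
          ((f (k + 1) : ℝ) * x ^ (k + 1)) * ((p (m - k) : ℝ) * x ^ (m - k)) :=
    Finset.sum_congr rfl fun m _ => h1 m
  rw [h2, Finset.sum_sigma']
  refine Finset.sum_nbij' (i := fun q => ⟨q.1 + q.2, q.1⟩)
    (j := fun q : Σ _ : ℕ, ℕ => (q.2, q.1 - q.2)) ?_ ?_ ?_ ?_ ?_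
  · intro q hq
    simp only [Finset.mem_filter, Finset.mem_product, Finset.mem_range] at hq
    simp only [Finset.mem_sigma, Finset.mem_range]
    omega
  · intro q hq
    simp only [Finset.mem_sigma, Finset.mem_range] at hq
    simp only [Finset.mem_filter, Finset.mem_product, Finset.mem_range]
    omega
  · rintro ⟨k, j⟩ hq
    dsimp only
    rw [Nat.add_sub_cancel_left]
  · rintro ⟨m, k⟩ hq
    simp only [Finset.mem_sigma, Finset.mem_range] at hq
    dsimp only
    have harith : k + (m - k) = m := by omega
    rw [harith]
  · rintro ⟨k, j⟩ hq
    dsimp only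
    rw [Nat.add_sub_cancel_left]

lemma sum_range_le (hp0 : p 0 = 1)
    (hren : ∀ n, p (n + 1) = ∑ k ∈ Finset.range (n + 1), f (k + 1) * p (n - k))
    (x : ℝ) (hx : 0 ≤ x) (N : ℕ) :
    ∑ n ∈ Finset.range (N + 1), (p n : ℝ) * x ^ n ≤
      1 + (∑ k ∈ Finset.range N, (f (k + 1) : ℝ) * x ^ (k + 1)) *
        (∑ j ∈ Finset.range N, (p j : ℝ) * x ^ j) := by
  rw [Finset.sum_range_succ']
  simp only [hp0, Nat.cast_one, pow_zero, mul_one, one_mul]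
  rw [add_comm (1 : ℝ)]
  gcongr ?_ + 1
  rw [← coeff_eq p f hren x N, Finset.sum_mul_sum, ← Finset.sum_product']
  refine Finset.sum_le_sum_of_subset_of_nonneg (Finset.filter_subset _ _) ?_
  intro q _ _
  positivity

lemma le_sum_range (hren : ∀ n, p (n + 1) = ∑ k ∈ Finset.range (n + 1), f (k + 1) * p (n - k))
    (x : ℝ) (hx : 0 ≤ x) (s : Finset ℕ) (N : ℕ) :
    (∑ k ∈ s, (f (k + 1) : ℝ) * x ^ (k + 1)) * (∑ j ∈ Finset.range N, (p j : ℝ) * x ^ j) ≤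
      ∑ m ∈ Finset.range (s.sup id + N + 1), (p (m + 1) : ℝ) * x ^ (m + 1) := by
  rw [← coeff_eq p f hren x (s.sup id + N + 1), Finset.sum_mul_sum, ← Finset.sum_product']
  refine Finset.sum_le_sum_of_subset_of_nonneg ?_ ?_
  · intro q hq
    simp only [Finset.mem_product, Finset.mem_range] at hq
    have hle : q.1 ≤ s.sup id := Finset.le_sup (f := id) hq.1
    simp only [Finset.mem_filter, Finset.mem_product, Finset.mem_range]
    omega
  · intro q _ _
    positivity

end Analytic

lemma main (pn fn : ℕ → ℕ) (R L : ℝ) (hp0 : pn 0 = 1)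
    (hren : ∀ n, pn (n + 1) = ∑ k ∈ Finset.range (n + 1), fn (k + 1) * pn (n - k))
    (hfr : ∃ m, 1 ≤ fn (m + 1))
    (hRrad : IsRadius (fun n => (pn n : ℝ)) R)
    (hLrad : IsRadius (fun n => (fn n : ℝ)) L) :
    R < L ↔ 1 < ∑' n : ℕ, (fn (n + 1) : ENNReal) * ENNReal.ofReal L ^ (n + 1) := by
  have hR0 : 0 ≤ R := hRrad.1
  have hL0 : 0 ≤ L := hLrad.1
  constructor
  · -- hard direction ⇒, by contradiction
    intro hRL
    by_contra hcon
    push_neg at hcon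
    set x : ℝ := (R + L) / 2 with hxdef
    have hx0 : 0 < x := by simp only [hxdef]; linarith
    have hxR : R < x := by simp only [hxdef]; linarith
    have hxL : x < L := by simp only [hxdef]; linarith
    have hsumf : Summable (fun n => (fn n : ℝ) * x ^ n) := (hLrad.2 x hx0.le).1 hxL
    have hshift : Summable (fun n => (fn (n + 1) : ℝ) * x ^ (n + 1)) :=
      (summable_nat_add_iff (f := fun n => (fn n : ℝ) * x ^ n) 1).2 hsumf
    set c : ℝ := ∑' n, (fn (n + 1) : ℝ) * x ^ (n + 1) with hcdef
    have hc0 : 0 ≤ c := tsum_nonneg fun n => by positivity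
    -- c < 1
    have hofc : ENNReal.ofReal c = ∑' n, (fn (n + 1) : ENNReal) * ENNReal.ofReal x ^ (n + 1) := by
      rw [hcdef, ENNReal.ofReal_tsum_of_nonneg (fun n => by positivity) hshift]
      refine tsum_congr fun n => ?_
      rw [ENNReal.ofReal_mul (by positivity), ENNReal.ofReal_pow hx0.le,
        ENNReal.ofReal_natCast]
    have hdecomp : (∑' n, (fn (n + 1) : ENNReal) * ENNReal.ofReal L ^ (n + 1)) =
        (∑' n, (fn (n + 1) : ENNReal) * ENNReal.ofReal x ^ (n + 1)) +
        (∑' n, (fn (n + 1) : ENNReal) * ENNReal.ofReal (L ^ (n + 1) - x ^ (n + 1))) := by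
      rw [← ENNReal.tsum_add]
      refine tsum_congr fun n => ?_
      rw [← mul_add]
      congr 1
      rw [← ENNReal.ofReal_pow hx0.le, ← ENNReal.ofReal_add (by positivity)
        (sub_nonneg.mpr (pow_le_pow_left₀ hx0.le hxL.le (n + 1))),
        add_sub_cancel, ENNReal.ofReal_pow hL0]
    obtain ⟨m, hm⟩ := hfr
    have hδpos : 0 < ENNReal.ofReal (L ^ (m + 1) - x ^ (m + 1)) :=
      ENNReal.ofReal_pos.mpr (sub_pos.mpr (pow_lt_pow_left₀ hxL hx0.le (by omega)))
    have hterm : ENNReal.ofReal (L ^ (m + 1) - x ^ (m + 1)) ≤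
        ∑' n, (fn (n + 1) : ENNReal) * ENNReal.ofReal (L ^ (n + 1) - x ^ (n + 1)) := by
      refine le_trans ?_ (ENNReal.le_tsum m)
      exact le_mul_of_one_le_left zero_le (by exact_mod_cast hm)
    have hclt : ENNReal.ofReal c < 1 := by
      have h1 : ENNReal.ofReal c + ENNReal.ofReal (L ^ (m + 1) - x ^ (m + 1)) ≤ 1 := by
        rw [hofc]
        calc (∑' n, (fn (n + 1) : ENNReal) * ENNReal.ofReal x ^ (n + 1)) +
              ENNReal.ofReal (L ^ (m + 1) - x ^ (m + 1))
            ≤ (∑' n, (fn (n + 1) : ENNReal) * ENNReal.ofReal x ^ (n + 1)) +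
              (∑' n, (fn (n + 1) : ENNReal) * ENNReal.ofReal (L ^ (n + 1) - x ^ (n + 1))) := by
              gcongr
          _ = ∑' n, (fn (n + 1) : ENNReal) * ENNReal.ofReal L ^ (n + 1) := hdecomp.symm
          _ ≤ 1 := hcon
      calc ENNReal.ofReal c
          < ENNReal.ofReal c + ENNReal.ofReal (L ^ (m + 1) - x ^ (m + 1)) :=
            ENNReal.lt_add_right ENNReal.ofReal_ne_top hδpos.ne'
        _ ≤ 1 := h1
    have hc1 : c < 1 := by
      rwa [ENNReal.ofReal_lt_one] at hclt
    have h1c : (0 : ℝ) < 1 - c := by linarith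
    set B : ℝ := (1 - c)⁻¹ with hBdef
    have hB0 : 0 ≤ B := le_of_lt (by positivity)
    have hBeq : 1 + c * B = B := by
      rw [hBdef]
      field_simp
      ring
    have hbound : ∀ N, ∑ n ∈ Finset.range N, (pn n : ℝ) * x ^ n ≤ B := by
      intro N
      induction N with
      | zero => simpa using hB0
      | succ N ih =>
        refine le_trans (sum_range_le pn fn hp0 hren x hx0.le N) ?_
        rw [← hBeq]
        gcongr 1 + ?_
        refine mul_le_mul ?_ ih (Finset.sum_nonneg fun j _ => by positivity) hc0
        exact Summable.sum_le_tsum (Finset.range N) (fun k _ => by positivity) hshift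
      
    have hsum : Summable (fun n => (pn n : ℝ) * x ^ n) :=
      summable_of_sum_range_le (fun n => by positivity) hbound
    exact ((hRrad.2 x hx0.le).2 hxR) hsum
  · -- easy direction ⇐
    intro h1
    have hLpos : 0 < L := by
      rcases hL0.lt_or_eq with h | h
      · exact h
      · rw [← h] at h1
        simp [zero_pow] at h1
    rw [ENNReal.tsum_eq_iSup_sum] at h1
    obtain ⟨s, hs⟩ := lt_iSup_iff.mp h1
    set g : ℝ → ℝ := fun y => ∑ n ∈ s, (fn (n + 1) : ℝ) * y ^ (n + 1) with hgdef
    have hsum_eq : ∑ n ∈ s, (fn (n + 1) : ENNReal) * ENNReal.ofReal L ^ (n + 1)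
        = ENNReal.ofReal (g L) := by
      rw [hgdef]
      rw [ENNReal.ofReal_sum_of_nonneg (fun n _ => by positivity)]
      refine Finset.sum_congr rfl fun n _ => ?_
      rw [ENNReal.ofReal_mul (by positivity), ENNReal.ofReal_pow hL0, ENNReal.ofReal_natCast]
    have hgL : 1 < g L := by
      by_contra h
      push_neg at h
      rw [hsum_eq] at hs
      exact absurd (ENNReal.ofReal_le_one.mpr h) (not_le.mpr hs)
    have hcont : Continuous g := by
      refine continuous_finset_sum s fun n _ => ?_
      exact continuous_const.mul (continuous_pow (n + 1))
    have hopen : IsOpen {y : ℝ | 1 < g y} := isOpen_lt continuous_const hcont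
    obtain ⟨ε, hε, hball⟩ := Metric.isOpen_iff.mp hopen L hgL
    set x : ℝ := max (L - ε / 2) (L / 2) with hxdef
    have hx0 : 0 ≤ x := le_trans (by linarith) (le_max_right _ _)
    have hxL : x < L := max_lt (by linarith) (by linarith)
    have hgx : 1 < g x := by
      refine hball ?_
      rw [Metric.mem_ball, Real.dist_eq, abs_lt]
      constructor
      · have := le_max_left (L - ε / 2) (L / 2)
        linarith
      · linarith
    -- divergence at x
    have hnsum : ¬ Summable (fun n => (pn n : ℝ) * x ^ n) := by
      intro hsum
      set P : ℝ := ∑' n, (pn n : ℝ) * x ^ n with hPdef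
      have hP1 : 1 ≤ P := by
        have := Summable.le_tsum hsum 0 (fun i _ => by positivity)
        simpa [hp0] using this
      have key : ∀ N, 1 + g x * (∑ j ∈ Finset.range N, (pn j : ℝ) * x ^ j) ≤ P := by
        intro N
        have h2 := le_sum_range pn fn hren x hx0 s N
        have h3 : ∑ m ∈ Finset.range (s.sup id + N + 1 + 1), (pn m : ℝ) * x ^ m ≤ P :=
          Summable.sum_le_tsum _ (fun i _ => by positivity) hsum
        rw [Finset.sum_range_succ'] at h3
        simp only [hp0, Nat.cast_one, pow_zero, mul_one] at h3
        have hgxeq : g x = ∑ k ∈ s, (fn (k + 1) : ℝ) * x ^ (k + 1) := rfl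
        rw [hgxeq]
        linarith
      have htend : Filter.Tendsto (fun N => ∑ j ∈ Finset.range N, (pn j : ℝ) * x ^ j)
          Filter.atTop (nhds P) := hsum.hasSum.tendsto_sum_nat
      have hlim : 1 + g x * P ≤ P := by
        refine le_of_tendsto (Filter.Tendsto.add tendsto_const_nhds (htend.const_mul (g x))) ?_
        exact Filter.Eventually.of_forall key
      nlinarith
    have hxR : ¬ x < R := fun h => hnsum (((hRrad.2 x hx0).1) h)
    push_neg at hxR
    linarith

end Stmt8

/-- For a strongly connected countable graph, R < L iff ∑_{n≥1} f_{uu}(n) Lⁿ > 1. -/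
theorem stmt_8 {V : Type*} [Countable V] (Adj : V → V → Prop)
    (hSC : StronglyConnected Adj) (u : V) (R L : ℝ)
    (hR : ∀ v w : V, IsRadius (fun n => (pathCount Adj v w n : ℝ)) R)
    (hL : IsRadius (fun n => (firstReturnCount Adj u n : ℝ)) L) :
    R < L ↔
      1 < ∑' n : ℕ, (firstReturnCount Adj u (n + 1) : ENNReal) * ENNReal.ofReal L ^ (n + 1) := by
  classical
  have hfin : ∀ v w k, (Stmt8.NP Adj v w k).Finite := fun v w k => Stmt8.np_finite hSC hR v w k
  have hp0 : pathCount Adj u u 0 = 1 := by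
    rw [Stmt8.pathCount_eq]; exact Stmt8.p_zero u
  have hren : ∀ n, pathCount Adj u u (n + 1) =
      ∑ k ∈ Finset.range (n + 1), firstReturnCount Adj u (k + 1) * pathCount Adj u u (n - k) := by
    intro n
    simp only [Stmt8.pathCount_eq, Stmt8.frCount_eq]
    exact Stmt8.renewal hfin u n
  have hfr : ∃ m, 1 ≤ firstReturnCount Adj u (m + 1) := by
    by_contra h
    push_neg at h
    have hz : ∀ m, firstReturnCount Adj u (m + 1) = 0 := fun m => by have := h m; omega
    have hpz : ∀ n, pathCount Adj u u (n + 1) = 0 := by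
      intro n
      rw [hren n]
      exact Finset.sum_eq_zero fun k _ => by rw [hz k, Nat.zero_mul]
    obtain ⟨n, hn0, hnc⟩ := hSC u u
    obtain ⟨m, rfl⟩ : ∃ m, n = m + 1 := ⟨n - 1, by omega⟩
    rw [hpz m] at hnc
    exact lt_irrefl 0 hnc
  exact Stmt8.main (fun n => pathCount Adj u u n) (fun n => firstReturnCount Adj u n) R L hp0
    hren hfr (hR u u) hL
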